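/- Let t : ℕ → ℝ with t_n ≥ 0 for all n, not identically zero, and n_0 the least index with t_{n_0} > 0. For n ≥ n_0 set ξ^{(n)}_j = t_j / (Σ_{i=0}^n t_i) ∈ stdSimplex ℝ (Fin (n+1)), let ξ^{(n)} be arbitrary in the simplex for n < n_0, define f_n(x)_j = x_j + x_{n+1}·ξ^{(n)}_j, and let Δ be the inverse limit. Let D = {y : ℕ → ℝ : y_j ≥ 0 for all j and Σ_{j=0}^N y_j ≤ 1 for all N} with the product topology, and define g : D → Π_n (Fin (n+1) → ℝ) by g(y)_n = (y_0, …, y_n) + (1 − Σ_{j=0}^n y_j)·ξ^{(n)} for n ≥ n_0 and g(y)_n = f_n(g(y)_{n+1}) for n < n_0. Then g maps D into Δ, g is continuous and affine, g is surjective onto Δ, g(δ^{(j)}) = e_j for each j ∈ ℕ (where δ^{(j)} ∈ D is the indicator function of {j}), and g(0) = e_∞ (where e_∞ ∈ Δ is the unique element with n-th coordinate ξ^{(n)} for all n ≥ n_0). -/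

import Mathlib

/-- Stationary case: the map `g` from the Bauer-simplex model `D` into the inverse limit `Δ`
is well defined, continuous, affine and surjective onto `Δ`; it sends the indicator `δ^{(j)}`
to `e_j` and the zero sequence to `e_∞`. -/
theorem stmt_15 (t : ℕ → ℝ) (ht : ∀ n, 0 ≤ t n) (n₀ : ℕ)
    (hn₀ : 0 < t n₀) (hn₀min : ∀ i, i < n₀ → t i = 0)
    (ξ : ∀ n : ℕ, Fin (n + 1) → ℝ)
    (hξsimplex : ∀ n, ξ n ∈ stdSimplex ℝ (Fin (n + 1)))
    (hξ : ∀ n, n₀ ≤ n → ∀ j : Fin (n + 1),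
      ξ n j = t (j : ℕ) / ∑ i ∈ Finset.range (n + 1), t i)
    (Δ : Set (∀ n, Fin (n + 1) → ℝ))
    (hΔ : Δ = {x | (∀ n, x n ∈ stdSimplex ℝ (Fin (n + 1))) ∧
      ∀ n, ∀ j : Fin (n + 1),
        x (n + 1) j.castSucc + x (n + 1) (Fin.last (n + 1)) * ξ n j = x n j})
    (e : ℕ → ∀ m : ℕ, Fin (m + 1) → ℝ)
    (heΔ : ∀ n, e n ∈ Δ)
    (he : ∀ n, ∀ m, n ≤ m → ∀ j : Fin (m + 1), e n m j = if (j : ℕ) = n then 1 else 0)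
    (eInf : ∀ m : ℕ, Fin (m + 1) → ℝ)
    (heInfΔ : eInf ∈ Δ)
    (heInf : ∀ n, n₀ ≤ n → eInf n = ξ n)
    (D : Set (ℕ → ℝ))
    (hD : D = {y | (∀ j, 0 ≤ y j) ∧ ∀ N, ∑ j ∈ Finset.range (N + 1), y j ≤ 1})
    (g : (ℕ → ℝ) → ∀ n, Fin (n + 1) → ℝ)
    (hg₁ : ∀ y n, n₀ ≤ n → ∀ j : Fin (n + 1),
      g y n j = y (j : ℕ) + (1 - ∑ i ∈ Finset.range (n + 1), y i) * ξ n j)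
    (hg₂ : ∀ y n, n < n₀ → ∀ j : Fin (n + 1),
      g y n j = g y (n + 1) j.castSucc + g y (n + 1) (Fin.last (n + 1)) * ξ n j) :
    Set.MapsTo g D Δ ∧
    ContinuousOn g D ∧
    (∀ y ∈ D, ∀ z ∈ D, ∀ a b : ℝ, 0 ≤ a → 0 ≤ b → a + b = 1 →
      ∀ (n : ℕ) (j : Fin (n + 1)),
        g (fun i => a * y i + b * z i) n j = a * g y n j + b * g z n j) ∧
    Set.SurjOn g D Δ ∧
    (∀ j : ℕ, g (fun m => if m = j then 1 else 0) = e j) ∧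
    g (fun _ => 0) = eInf := by
  subst hΔ hD
  have hS : ∀ n, n₀ ≤ n → 0 < ∑ i ∈ Finset.range (n + 1), t i := by
    intro n hn
    have h1 : t n₀ ≤ ∑ i ∈ Finset.range (n + 1), t i :=
      Finset.single_le_sum (fun i _ => ht i) (Finset.mem_range.mpr (by omega))
    linarith
  have hξ0 : ∀ n (j : Fin (n + 1)), 0 ≤ ξ n j := fun n j => (hξsimplex n).1 j
  have hξ1 : ∀ n, ∑ j, ξ n j = 1 := fun n => (hξsimplex n).2
  have hξcomp : ∀ n, n₀ ≤ n → ∀ j : Fin (n + 1),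
      ξ (n + 1) j.castSucc + ξ (n + 1) (Fin.last (n + 1)) * ξ n j = ξ n j := by
    intro n hn j
    have h := heInfΔ.2 n j
    rwa [heInf n hn, heInf (n + 1) (by omega)] at h
  -- compatibility of `g y` for every `y`
  have hgcomp : ∀ (y : ℕ → ℝ) n (j : Fin (n + 1)),
      g y (n + 1) j.castSucc + g y (n + 1) (Fin.last (n + 1)) * ξ n j = g y n j := by
    intro y n j
    rcases lt_or_ge n n₀ with h | h
    · exact (hg₂ y n h j).symm
    · rw [hg₁ y (n + 1) (by omega) j.castSucc, hg₁ y (n + 1) (by omega) (Fin.last (n + 1)),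
        hg₁ y n h j]
      have hc := hξcomp n h j
      have hsum : ∑ i ∈ Finset.range (n + 1 + 1), y i
          = ∑ i ∈ Finset.range (n + 1), y i + y (n + 1) := Finset.sum_range_succ y (n + 1)
      rw [hsum]
      simp only [Fin.coe_castSucc, Fin.val_last]
      linear_combination (1 - (∑ i ∈ Finset.range (n + 1), y i + y (n + 1))) * hc
  -- uniqueness from large indices downward
  have hU : ∀ (N : ℕ) (x x' : ∀ n, Fin (n + 1) → ℝ),
      (∀ n (j : Fin (n + 1)), x (n + 1) j.castSucc + x (n + 1) (Fin.last (n + 1)) * ξ n j = x n j) →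
      (∀ n (j : Fin (n + 1)), x' (n + 1) j.castSucc + x' (n + 1) (Fin.last (n + 1)) * ξ n j = x' n j) →
      (∀ m, N ≤ m → x m = x' m) → x = x' := by
    intro N x x' hx hx' hhigh
    have key : ∀ k n, N ≤ n + k → x n = x' n := by
      intro k
      induction k with
      | zero => intro n hn; exact hhigh n (by omega)
      | succ k ih =>
        intro n hn
        rcases le_or_gt N n with h | h
        · exact hhigh n h
        · funext j
          rw [← hx n j, ← hx' n j, ih (n + 1) (by omega)]
    exact funext fun n => key N n (by omega)
  -- membership of the image in the simplices
  have hmembase : ∀ y : ℕ → ℝ, (∀ j, 0 ≤ y j) → (∀ N, ∑ j ∈ Finset.range (N + 1), y j ≤ 1) →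
      ∀ n, n₀ ≤ n → g y n ∈ stdSimplex ℝ (Fin (n + 1)) := by
    intro y hy0 hy1 n hn
    constructor
    · intro j
      rw [hg₁ y n hn j]
      have h1 := hy1 n
      have h2 := hy0 (j : ℕ)
      have h3 := hξ0 n j
      nlinarith
    · simp only [hg₁ y n hn]
      rw [Finset.sum_add_distrib, ← Finset.mul_sum, hξ1 n,
        Fin.sum_univ_eq_sum_range (fun i => y i)]
      ring
  have hmem : ∀ y : ℕ → ℝ, (∀ j, 0 ≤ y j) → (∀ N, ∑ j ∈ Finset.range (N + 1), y j ≤ 1) →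
      ∀ n, g y n ∈ stdSimplex ℝ (Fin (n + 1)) := by
    intro y hy0 hy1
    have key : ∀ k n, n₀ ≤ n + k → g y n ∈ stdSimplex ℝ (Fin (n + 1)) := by
      intro k
      induction k with
      | zero => intro n hn; exact hmembase y hy0 hy1 n (by omega)
      | succ k ih =>
        intro n hn
        rcases le_or_gt n₀ n with h | h
        · exact hmembase y hy0 hy1 n h
        · have hx := ih (n + 1) (by omega)
          constructor
          · intro j
            rw [hg₂ y n h j]
            have h1 := hx.1 j.castSucc
            have h2 := hx.1 (Fin.last (n + 1))
            have h3 := hξ0 n j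
            nlinarith
          · simp only [hg₂ y n h]
            rw [Finset.sum_add_distrib, ← Finset.mul_sum, hξ1 n]
            have h2 := hx.2
            rw [Fin.sum_univ_castSucc] at h2
            linarith
    exact fun n => key n₀ n (by omega)
  have hmapsto : Set.MapsTo g {y | (∀ j, 0 ≤ y j) ∧ ∀ N, ∑ j ∈ Finset.range (N + 1), y j ≤ 1}
      {x | (∀ n, x n ∈ stdSimplex ℝ (Fin (n + 1))) ∧
        ∀ n, ∀ j : Fin (n + 1),
          x (n + 1) j.castSucc + x (n + 1) (Fin.last (n + 1)) * ξ n j = x n j} := by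
    intro y hy
    exact ⟨hmem y hy.1 hy.2, fun n j => hgcomp y n j⟩
  -- continuity
  have hcont : ∀ n (j : Fin (n + 1)), Continuous fun y : ℕ → ℝ => g y n j := by
    have base : ∀ n, n₀ ≤ n → ∀ j : Fin (n + 1), Continuous fun y : ℕ → ℝ => g y n j := by
      intro n hn j
      have hfe : (fun y : ℕ → ℝ => g y n j)
          = fun y => y ↑j + (1 - ∑ i ∈ Finset.range (n + 1), y i) * ξ n j :=
        funext fun y => hg₁ y n hn j
      rw [hfe]
      exact (continuous_apply _).add
        ((continuous_const.sub (continuous_finset_sum _ fun i _ => continuous_apply i)).mul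
          continuous_const)
    have key : ∀ k n, n₀ ≤ n + k → ∀ j : Fin (n + 1), Continuous fun y : ℕ → ℝ => g y n j := by
      intro k
      induction k with
      | zero => intro n hn j; exact base n (by omega) j
      | succ k ih =>
        intro n hn j
        rcases le_or_gt n₀ n with h | h
        · exact base n h j
        · have hfe : (fun y : ℕ → ℝ => g y n j)
              = fun y => g y (n + 1) j.castSucc + g y (n + 1) (Fin.last (n + 1)) * ξ n j :=
            funext fun y => hg₂ y n h j
          rw [hfe]
          exact (ih (n + 1) (by omega) j.castSucc).add
            ((ih (n + 1) (by omega) (Fin.last (n + 1))).mul continuous_const)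
    intro n j
    exact key n₀ n (by omega) j
  -- affinity
  have haff : ∀ (y z : ℕ → ℝ) (a b : ℝ), a + b = 1 →
      ∀ (n : ℕ) (j : Fin (n + 1)),
        g (fun i => a * y i + b * z i) n j = a * g y n j + b * g z n j := by
    intro y z a b hab
    have base : ∀ n, n₀ ≤ n → ∀ j : Fin (n + 1),
        g (fun i => a * y i + b * z i) n j = a * g y n j + b * g z n j := by
      intro n hn j
      rw [hg₁ _ n hn j, hg₁ y n hn j, hg₁ z n hn j]
      have hs : ∑ i ∈ Finset.range (n + 1), (a * y i + b * z i)
          = a * ∑ i ∈ Finset.range (n + 1), y i + b * ∑ i ∈ Finset.range (n + 1), z i := by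
        rw [Finset.sum_add_distrib, ← Finset.mul_sum, ← Finset.mul_sum]
      rw [hs]
      linear_combination (-(ξ n j)) * hab
    have key : ∀ k n, n₀ ≤ n + k → ∀ j : Fin (n + 1),
        g (fun i => a * y i + b * z i) n j = a * g y n j + b * g z n j := by
      intro k
      induction k with
      | zero => intro n hn j; exact base n (by omega) j
      | succ k ih =>
        intro n hn j
        rcases le_or_gt n₀ n with h | h
        · exact base n h j
        · rw [hg₂ _ n h j, hg₂ y n h j, hg₂ z n h j, ih (n + 1) (by omega) j.castSucc,
            ih (n + 1) (by omega) (Fin.last (n + 1))]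
          ring
    exact fun n j => key n₀ n (by omega) j
  -- image of the indicator functions
  have hdelta : ∀ j : ℕ, g (fun m => if m = j then 1 else 0) = e j := by
    intro j
    apply hU (max n₀ j) _ _ (hgcomp _) ((heΔ j).2)
    intro m hm
    funext i
    rw [hg₁ _ m (le_trans (le_max_left _ _) hm) i, he j m (le_trans (le_max_right _ _) hm) i]
    have hs : (∑ i ∈ Finset.range (m + 1), if i = j then (1 : ℝ) else 0) = 1 := by
      have hjm : j ≤ m := le_trans (le_max_right _ _) hm
      simp [Finset.sum_ite_eq', Nat.lt_succ_iff.mpr hjm]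
    rw [hs]
    ring
  -- image of zero
  have hzero : g (fun _ => 0) = eInf := by
    apply hU n₀ _ _ (hgcomp _) heInfΔ.2
    intro m hm
    funext i
    rw [hg₁ _ m hm i, heInf m hm]
    simp
  -- surjectivity
  have hsurj : Set.SurjOn g {y | (∀ j, 0 ≤ y j) ∧ ∀ N, ∑ j ∈ Finset.range (N + 1), y j ≤ 1}
      {x | (∀ n, x n ∈ stdSimplex ℝ (Fin (n + 1))) ∧
        ∀ n, ∀ j : Fin (n + 1),
          x (n + 1) j.castSucc + x (n + 1) (Fin.last (n + 1)) * ξ n j = x n j} := by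
    intro x hx
    obtain ⟨hx1, hx2⟩ := hx
    set X : ℕ → ℕ → ℝ := fun m j => if h : j < m + 1 then x m ⟨j, h⟩ else 0 with hXdef
    set Ξ : ℕ → ℕ → ℝ := fun m j => if h : j < m + 1 then ξ m ⟨j, h⟩ else 0 with hΞdef
    have hX0 : ∀ m j, 0 ≤ X m j := by
      intro m j
      rw [hXdef]
      dsimp only
      split
      · exact (hx1 m).1 _
      · exact le_refl 0
    have hΞ0 : ∀ m j, 0 ≤ Ξ m j := by
      intro m j
      rw [hΞdef]
      dsimp only
      split
      · exact hξ0 m _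
      · exact le_refl 0
    have hXeq : ∀ m (i : Fin (m + 1)), X m ↑i = x m i := by
      intro m i
      simp [hXdef, Nat.lt_succ_iff.mp i.isLt]
    have hΞeq : ∀ m (i : Fin (m + 1)), Ξ m ↑i = ξ m i := by
      intro m i
      simp [hΞdef, Nat.lt_succ_iff.mp i.isLt]
    have hXval : ∀ m j (h : j < m + 1), X m j = x m ⟨j, h⟩ := by
      intro m j h
      simp [hXdef, Nat.lt_succ_iff.mp h]
    have hΞval : ∀ m j (h : j < m + 1), Ξ m j = ξ m ⟨j, h⟩ := by
      intro m j h
      simp [hΞdef, Nat.lt_succ_iff.mp h]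
    have hcompX : ∀ m j, j < m + 1 → X m j = X (m + 1) j + X (m + 1) (m + 1) * Ξ m j := by
      intro m j h
      have hc := hx2 m ⟨j, h⟩
      rw [hXval m j h, hXval (m + 1) j (by omega), hXval (m + 1) (m + 1) (by omega),
        hΞval m j h]
      exact hc.symm
    have hanti : ∀ j : ℕ, Antitone fun m => X (j + m) j := by
      intro j
      apply antitone_nat_of_succ_le
      intro m
      have h : j < j + m + 1 := by omega
      have hc := hcompX (j + m) j h
      have h0 := hX0 (j + m + 1) (j + m + 1)
      have h1 := hΞ0 (j + m) j
      have h2 : X (j + (m + 1)) j = X (j + m + 1) j := rfl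
      rw [h2]
      nlinarith [mul_nonneg h0 h1]
    set y : ℕ → ℝ := fun j => ⨅ m, X (j + m) j with hydef
    have hlim : ∀ j, Filter.Tendsto (fun m => X m j) Filter.atTop (nhds (y j)) := by
      intro j
      have h1 : Filter.Tendsto (fun m => X (j + m) j) Filter.atTop (nhds (y j)) := by
        apply tendsto_atTop_ciInf (hanti j)
        refine ⟨0, ?_⟩
        rintro r ⟨m, rfl⟩
        exact hX0 _ _
      have h2 : Filter.Tendsto (fun m => X (m + j) j) Filter.atTop (nhds (y j)) := by
        simpa [add_comm] using h1
      exact (Filter.tendsto_add_atTop_iff_nat j).mp h2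
    have hy0 : ∀ j, 0 ≤ y j := fun j => le_ciInf fun m => hX0 _ _
    have hy1 : ∀ N, ∑ j ∈ Finset.range (N + 1), y j ≤ 1 := by
      intro N
      have hs : Filter.Tendsto (fun m => ∑ j ∈ Finset.range (N + 1), X m j) Filter.atTop
          (nhds (∑ j ∈ Finset.range (N + 1), y j)) :=
        tendsto_finset_sum _ fun j _ => hlim j
      apply le_of_tendsto hs
      filter_upwards [Filter.eventually_ge_atTop N] with m hm
      calc ∑ j ∈ Finset.range (N + 1), X m j ≤ ∑ j ∈ Finset.range (m + 1), X m j :=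
            Finset.sum_le_sum_of_subset_of_nonneg
              (by intro i hi; simp only [Finset.mem_range] at hi ⊢; omega) (fun i _ _ => hX0 m i)
        _ = ∑ i : Fin (m + 1), x m i := by
            rw [← Fin.sum_univ_eq_sum_range (fun i => X m i) (m + 1)]
            exact Finset.sum_congr rfl fun i _ => hXeq m i
        _ = 1 := (hx1 m).2
    have hΞsum : ∀ n, n₀ ≤ n → ∀ m, n ≤ m → ∑ i ∈ Finset.range (n + 1), Ξ m i
        = (∑ i ∈ Finset.range (n + 1), t i) / (∑ i ∈ Finset.range (m + 1), t i) := by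
      intro n hn m hm
      rw [Finset.sum_div]
      apply Finset.sum_congr rfl
      intro i hi
      have hi' : i < m + 1 := by have := Finset.mem_range.mp hi; omega
      rw [hΞval m i hi', hξ m (by omega) ⟨i, hi'⟩]
    have hkey : ∀ n, n₀ ≤ n → ∀ m, n ≤ m → ∀ j, (hj : j < n + 1) →
        Ξ m j = (∑ i ∈ Finset.range (n + 1), Ξ m i) * Ξ n j := by
      intro n hn m hm j hj
      have hj' : j < m + 1 := by omega
      rw [hΞsum n hn m hm, hΞval m j hj', hΞval n j hj, hξ m (by omega) ⟨j, hj'⟩,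
        hξ n hn ⟨j, hj⟩]
      have h1 := (hS n hn).ne'
      have h2 := (hS m (by omega)).ne'
      field_simp
    have star' : ∀ n, n₀ ≤ n → ∀ m, n ≤ m → ∀ j : Fin (n + 1),
        x n j = X m ↑j + (1 - ∑ i ∈ Finset.range (n + 1), X m i) * ξ n j := by
      intro n hn m hm
      induction m, hm using Nat.le_induction with
      | base =>
        intro j
        have hsum : ∑ i ∈ Finset.range (n + 1), X n i = 1 := by
          rw [← Fin.sum_univ_eq_sum_range (fun i => X n i) (n + 1),
            Finset.sum_congr rfl fun i _ => hXeq n i]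
          exact (hx1 n).2
        rw [hsum, hXeq n j]
        ring
      | succ m hm ih =>
        intro j
        have hL : ∀ i ∈ Finset.range (n + 1), X m i = X (m + 1) i + X (m + 1) (m + 1) * Ξ m i := by
          intro i hi
          exact hcompX m i (by have := Finset.mem_range.mp hi; omega)
        have hsum : ∑ i ∈ Finset.range (n + 1), X m i
            = ∑ i ∈ Finset.range (n + 1), X (m + 1) i
              + X (m + 1) (m + 1) * ∑ i ∈ Finset.range (n + 1), Ξ m i := by
          rw [Finset.sum_congr rfl hL, Finset.sum_add_distrib, ← Finset.mul_sum]
        have hXj := hcompX m ↑j (by omega)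
        have hk := hkey n hn m hm ↑j j.isLt
        rw [ih j, hXj, hsum, hk, hΞeq n j]
        ring
    have hgy : ∀ n, n₀ ≤ n → ∀ j : Fin (n + 1),
        x n j = y ↑j + (1 - ∑ i ∈ Finset.range (n + 1), y i) * ξ n j := by
      intro n hn j
      have h1 : Filter.Tendsto
          (fun m => X m ↑j + (1 - ∑ i ∈ Finset.range (n + 1), X m i) * ξ n j) Filter.atTop
          (nhds (y ↑j + (1 - ∑ i ∈ Finset.range (n + 1), y i) * ξ n j)) :=
        (hlim ↑j).add
          ((tendsto_const_nhds.sub (tendsto_finset_sum _ fun i _ => hlim i)).mul_const _)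
      have h3 : Filter.Tendsto
          (fun m => X m ↑j + (1 - ∑ i ∈ Finset.range (n + 1), X m i) * ξ n j) Filter.atTop
          (nhds (x n j)) := by
        apply Filter.Tendsto.congr' _ (tendsto_const_nhds : Filter.Tendsto (fun _ : ℕ => x n j) _ _)
        filter_upwards [Filter.eventually_ge_atTop n] with m hm
        exact star' n hn m hm j
      exact tendsto_nhds_unique h3 h1
    refine ⟨y, ⟨hy0, hy1⟩, ?_⟩
    apply hU n₀ _ _ (hgcomp y) hx2
    intro m hm
    funext i
    rw [hg₁ y m hm i]
    exact (hgy m hm i).symm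
  exact ⟨hmapsto, (continuous_pi fun n => continuous_pi fun j => hcont n j).continuousOn,
    fun y _ z _ a b _ _ hab n j => haff y z a b hab n j, hsurj, hdelta, hzero⟩
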